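/- arXiv:1603.07002 — 2 statements merged into one kernel-verified Lean document; each statement's English description precedes it below -/
import Mathlib

section
/- Let A be a unital C*-algebra and let u, v ∈ A be extremal partial isometries with ‖u − v‖ < 2. Let I₁ be the closed two-sided ideal of A generated by 1 − uu* and let J₂ be the closed two-sided ideal of A generated by 1 − v*v. Then I₁·J₂ = {0} (i.e., xy = 0 for all x ∈ I₁ and y ∈ J₂); likewise I₂·J₁ = {0}, where I₂ is the closed ideal generated by 1 − vv* and J₁ is the closed ideal generated by 1 − u*u. -/
/-- An element `u` of a C*-algebra is a partial isometry if `u * u* * u = u`. -/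
def IsPartialIsometry {A : Type*} [CStarAlgebra A] (u : A) : Prop :=
  u * star u * u = u

/-- A partial isometry in a unital C*-algebra is extremal if it is an extreme
point of the closed unit ball. -/
def IsExtremalPartialIsometry {A : Type*} [CStarAlgebra A] (u : A) : Prop :=
  IsPartialIsometry u ∧ u ∈ Set.extremePoints ℝ (Metric.closedBall (0 : A) 1)

/-- The closed two-sided ideal of `A` generated by an element `a`, as a set. -/
def closedIdealGen {A : Type*} [CStarAlgebra A] (a : A) : Set A :=
  closure (TwoSidedIdeal.span {a} : Set A)

section Auxiliary
variable {A : Type*} [CStarAlgebra A]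


lemma kadison_defect (u : A) (hu : IsExtremalPartialIsometry u) (c : A) :
    (1 - u * star u) * c * (1 - star u * u) = 0 := by
  rcases subsingleton_or_nontrivial A with hA | hA
  · exact Subsingleton.elim _ _
  letI := CStarAlgebra.spectralOrder A
  haveI := CStarAlgebra.spectralOrderedRing A
  obtain ⟨hpi, hext⟩ := hu
  rw [IsPartialIsometry] at hpi
  by_contra hz0
  have ht : (0:ℝ) < ‖(1 - u * star u) * c * (1 - star u * u)‖ := norm_pos_iff.mpr hz0
  set t : ℝ := ‖(1 - u * star u) * c * (1 - star u * u)‖ with htdef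
  set z' : A := (t⁻¹ : ℝ) • ((1 - u * star u) * c * (1 - star u * u)) with hz'
  have hz'norm : ‖z'‖ = 1 := by
    rw [hz', norm_smul, norm_inv, Real.norm_eq_abs, abs_of_pos ht, ← htdef,
      inv_mul_cancel₀ ht.ne']
  -- basic projection identities
  have hup : star u * (1 - u * star u) = 0 := by
    have h1 : star u * (u * star u) = star u := by
      calc star u * (u * star u) = star (u * star u * u) := by simp [star_mul, mul_assoc]
        _ = star u := by rw [hpi]
    rw [mul_sub, mul_one, h1, sub_self]
  have hee : star u * u * (star u * u) = star u * u := by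
    calc star u * u * (star u * u) = star u * (u * star u * u) := by noncomm_ring
      _ = star u * u := by rw [hpi]
  have hEq : (star u * u) * (1 - star u * u) = 0 := by
    rw [mul_sub, mul_one, hee, sub_self]
  -- cross terms vanish
  have huz : star u * z' = 0 := by
    have h2 : star u * ((1 - u * star u) * c * (1 - star u * u)) =
        (star u * (1 - u * star u)) * (c * (1 - star u * u)) := by noncomm_ring
    rw [hz', mul_smul_comm, h2, hup, zero_mul, smul_zero]
  have hzu : star z' * u = 0 := by
    have := congrArg star huz
    simpa [star_mul] using this
  -- star z'
  have hsz : star z' = (t⁻¹ : ℝ) • ((1 - star u * u) * star c * (1 - u * star u)) := by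
    rw [hz', star_smul]
    congr 1
    simp only [star_mul, star_sub, star_one, star_star]
    noncomm_ring
  -- E F' orthogonality
  have hXY : (star u * u) * ((1 - star u * u) * star c * (1 - u * star u) *
      ((1 - u * star u) * c * (1 - star u * u))) = 0 := by
    have h3 : (star u * u) * ((1 - star u * u) * star c * (1 - u * star u) *
        ((1 - u * star u) * c * (1 - star u * u))) =
        ((star u * u) * (1 - star u * u)) *
          (star c * ((1 - u * star u) * ((1 - u * star u) * c * (1 - star u * u)))) := by
      noncomm_ring
    rw [h3, hEq, zero_mul]
  have hEF : (star u * u) * (star z' * z') = 0 := by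
    rw [hsz, hz']
    simp only [smul_mul_assoc, mul_smul_comm, hXY, smul_zero]
  have hFE : (star z' * z') * (star u * u) = 0 := by
    have := congrArg star hEF
    simpa [star_mul, mul_assoc] using this
  -- f ≤ 1
  have hfnorm : ‖star z' * z'‖ = 1 := by
    rw [CStarRing.norm_star_mul_self, hz'norm, one_mul]
  have hF'1 : star z' * z' ≤ 1 := by
    have h := IsSelfAdjoint.le_algebraMap_norm_self (a := star z' * z')
      (by simpa [star_mul] using (IsSelfAdjoint.star_mul_self z'))
    rwa [hfnorm, map_one] at h
  -- core identity
  have hcore : (1 - star u * u) * (1 - star z' * z') * (1 - star u * u) =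
       1 - (star u * u + star z' * z') := by
    have hexp : (1 - star u * u) * (1 - star z' * z') * (1 - star u * u) =
        1 - (star u * u) - (star z' * z') - (star u * u)
          + (star u * u) * (star u * u) + (star u * u) * (star z' * z')
          + (star z' * z') * (star u * u)
          - ((star u * u) * (star z' * z')) * (star u * u) := by
      noncomm_ring
    rw [hexp, hee, hEF, hFE, zero_mul]
    abel
  have hpos : (0:A) ≤ 1 - (star u * u + star z' * z') := by
    have h1f : (0:A) ≤ 1 - star z' * z' := sub_nonneg.mpr hF'1
    have hconj := star_left_conjugate_nonneg h1f (1 - star u * u)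
    have hsa : star (1 - star u * u) = 1 - star u * u := by simp [star_sub, star_mul]
    rwa [hsa, hcore] at hconj
  have hEplus : (0:A) ≤ star u * u + star z' * z' :=
    add_nonneg (star_mul_self_nonneg u) (star_mul_self_nonneg z')
  have hnorm1 : ‖star u * u + star z' * z'‖ ≤ 1 := by
    have := CStarAlgebra.norm_le_norm_of_nonneg_of_le hEplus (sub_nonneg.mp hpos)
    rwa [norm_one] at this
  -- membership in the ball
  have hmem : ∀ w : A, star w * w = star u * u + star z' * z' →
      w ∈ Metric.closedBall (0:A) 1 := by
    intro w hw
    rw [mem_closedBall_zero_iff]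
    have h := CStarRing.norm_star_mul_self (x := w)
    rw [hw] at h
    nlinarith [norm_nonneg w, hnorm1]
  have hmemP : u + z' ∈ Metric.closedBall (0:A) 1 := by
    apply hmem (u + z')
    rw [star_add, add_mul, mul_add, mul_add, huz, hzu]
    abel
  have hmemM : u - z' ∈ Metric.closedBall (0:A) 1 := by
    apply hmem (u - z')
    rw [star_sub, sub_mul, mul_sub, mul_sub, huz, hzu]
    abel
  have hseg : u ∈ openSegment ℝ (u + z') (u - z') :=
    ⟨(1:ℝ)/2, (1:ℝ)/2, by norm_num, by norm_num, by norm_num, by module⟩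
  obtain h₁ := hext.2 hmemP hmemM hseg
  have : z' = 0 := by
    have := h₁
    rwa [add_eq_left] at this
  rw [this, norm_zero] at hz'norm
  norm_num at hz'norm



lemma chain_bound (u v y : A)
    (hy1 : ∀ c : A, (1 - star u * u) * (c * y) = 0)
    (hy2 : ∀ c : A, (1 - v * star v) * (c * y) = 0)
    (hy3 : v * y = 0) (hd : ‖u - v‖ < 2) : y = 0 := by
  set w : A := -(star v * u) with hw
  have hsw : star w = -(star u * v) := by rw [hw]; simp [star_mul]
  set z : ℕ → A := fun k => w ^ k * y with hzdef
  have hzk : ∀ k, z k = w ^ k * y := fun k => by rw [hzdef]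
  have hz0 : z 0 = y := by rw [hzk]; simp
  have hzsucc : ∀ k, z (k + 1) = w * z k := by
    intro k
    rw [hzk, hzk, pow_succ', mul_assoc]
  -- h1 : star u * u acts as identity on z k
  have h1 : ∀ k, star u * u * z k = z k := by
    intro k
    have h := hy1 (w ^ k)
    rw [← hzk] at h
    have h2 : z k - star u * u * z k = 0 := by rw [← h]; noncomm_ring
    exact (sub_eq_zero.mp h2).symm
  -- h2 : v * star v acts as identity on u * z k
  have h2 : ∀ k, v * star v * (u * z k) = u * z k := by
    intro k
    have h := hy2 (u * w ^ k)
    rw [mul_assoc, ← hzk] at h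
    have h2' : u * z k - v * star v * (u * z k) = 0 := by rw [← h]; noncomm_ring
    exact (sub_eq_zero.mp h2').symm
  have h3 : ∀ k, v * z (k + 1) = -(u * z k) := by
    intro k
    rw [hzsucc, hw]
    have e : v * (-(star v * u) * z k) = -(v * star v * (u * z k)) := by noncomm_ring
    rw [e, h2 k]
  have h4 : v * z 0 = 0 := by rw [hz0]; exact hy3
  -- diagonal inner products
  have h5 : ∀ k, star (z k) * z k = star y * y := by
    intro k
    induction k with
    | zero => rw [hz0]
    | succ n ih =>
      rw [hzsucc]
      calc star (w * z n) * (w * z n)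
          = star (z n) * (star u * (v * star v * (u * z n))) := by
            rw [star_mul, hsw, hw]; noncomm_ring
        _ = star (z n) * (star u * (u * z n)) := by rw [h2 n]
        _ = star (z n) * (star u * u * z n) := by noncomm_ring
        _ = star (z n) * z n := by rw [h1 n]
        _ = star y * y := ih
  -- off-diagonal vanishing
  have h6 : ∀ d k, star (z (k + d + 1)) * z k = 0 := by
    intro d k
    induction k with
    | zero =>
      simp only [Nat.zero_add]
      calc star (z (d + 1)) * z 0
          = star (w * z d) * y := by rw [hzsucc, hz0]
        _ = -(star (z d) * (star u * (v * y))) := by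
            rw [star_mul, hsw]; noncomm_ring
        _ = 0 := by rw [hy3, mul_zero, mul_zero, neg_zero]
    | succ n ih =>
      have e : n + 1 + d + 1 = (n + d + 1) + 1 := by omega
      rw [e, hzsucc, hzsucc n]
      calc star (w * z (n + d + 1)) * (w * z n)
          = star (z (n + d + 1)) * (star u * (v * star v * (u * z n))) := by
            rw [star_mul, hsw, hw]; noncomm_ring
        _ = star (z (n + d + 1)) * (star u * (u * z n)) := by rw [h2 n]
        _ = star (z (n + d + 1)) * (star u * u * z n) := by noncomm_ring
        _ = star (z (n + d + 1)) * z n := by rw [h1 n]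
        _ = 0 := ih
  have horth : ∀ j k, j ≠ k → star (z j) * z k = 0 := by
    intro j k hjk
    rcases lt_or_gt_of_ne hjk with h | h
    · obtain ⟨d, rfl⟩ : ∃ d, k = j + d + 1 := ⟨k - j - 1, by omega⟩
      have := congrArg star (h6 d j)
      simpa [star_mul, star_star] using this
    · obtain ⟨d, rfl⟩ : ∃ d, j = k + d + 1 := ⟨j - k - 1, by omega⟩
      exact h6 d k
  -- partial sums
  set b : ℕ → A := fun n => ∑ k ∈ Finset.range n, z k with hbdef
  have hb0 : b 0 = 0 := by rw [hbdef]; simp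
  have hbsucc : ∀ n, b (n + 1) = b n + z n := fun n => by
    rw [hbdef]; exact Finset.sum_range_succ _ _
  have h7 : ∀ n m, n ≤ m → star (b n) * z m = 0 := by
    intro n m hnm
    rw [hbdef]
    simp only [star_sum, Finset.sum_mul]
    apply Finset.sum_eq_zero
    intro k hk
    rw [Finset.mem_range] at hk
    exact horth k m (by omega)
  have h7' : ∀ n m, n ≤ m → star (z m) * b n = 0 := by
    intro n m hnm
    have := congrArg star (h7 n m hnm)
    simpa [star_mul, star_star] using this
  have h8 : ∀ n, star (b n) * b n = n • (star y * y) := by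
    intro n
    induction n with
    | zero => rw [hb0]; simp
    | succ n ih =>
      rw [hbsucc]
      have e : star (b n + z n) * (b n + z n) =
          star (b n) * b n + star (b n) * z n + star (z n) * b n + star (z n) * z n := by
        rw [star_add]; noncomm_ring
      rw [e, ih, h7 n n le_rfl, h7' n n le_rfl, h5 n, succ_nsmul]
      abel
  have h9 : ∀ n, star u * u * b n = b n := by
    intro n
    rw [hbdef]
    rw [Finset.mul_sum]
    exact Finset.sum_congr rfl fun k _ => h1 k
  have h10 : ∀ n, (u - v) * b (n + 1) = u * (b (n + 1) + b n) := by
    intro n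
    induction n with
    | zero =>
      rw [hbsucc 0, hb0]
      have e : (u - v) * (0 + z 0) = u * z 0 - v * z 0 := by noncomm_ring
      rw [e, h4, sub_zero]
      noncomm_ring
    | succ n ih =>
      rw [hbsucc (n + 1)]
      have e : (u - v) * (b (n + 1) + z (n + 1)) =
          (u - v) * b (n + 1) + (u * z (n + 1) - v * z (n + 1)) := by noncomm_ring
      rw [e, ih, h3 n, hbsucc n]
      noncomm_ring
  -- the quantitative estimate
  have hCC : ∀ n : ℕ, star ((u - v) * b (n + 1)) * ((u - v) * b (n + 1)) =
      (4 * n + 1) • (star y * y) := by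
    intro n
    rw [h10 n]
    have e : star (u * (b (n + 1) + b n)) * (u * (b (n + 1) + b n)) =
        star (b (n + 1) + b n) * (star u * u * (b (n + 1) + b n)) := by
      rw [star_mul]; noncomm_ring
    rw [e]
    have e2 : star u * u * (b (n + 1) + b n) = b (n + 1) + b n := by
      rw [mul_add, h9, h9]
    rw [e2]
    have e3 : star (b (n + 1) + b n) * (b (n + 1) + b n) =
        star (b (n + 1)) * b (n + 1) + star (b (n + 1)) * b n +
          star (b n) * b (n + 1) + star (b n) * b n := by
      rw [star_add]; noncomm_ring
    have e4 : star (b (n + 1)) * b n = n • (star y * y) := by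
      rw [hbsucc n, star_add, add_mul, h8 n, h7' n n le_rfl, add_zero]
    have e5 : star (b n) * b (n + 1) = n • (star y * y) := by
      rw [hbsucc n, mul_add, h8 n, h7 n n le_rfl, add_zero]
    rw [e3, e4, e5, h8, h8]
    simp only [← add_nsmul]
    congr 1
    omega
  -- pass to norms
  have hnormb : ∀ n : ℕ, ‖b n‖ * ‖b n‖ = (n : ℝ) * (‖y‖ * ‖y‖) := by
    intro n
    have h := congrArg norm (h8 n)
    rw [CStarRing.norm_star_mul_self, RCLike.norm_nsmul ℝ, CStarRing.norm_star_mul_self] at h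
    rw [h, nsmul_eq_mul]
  have hnormC : ∀ n : ℕ, ‖(u - v) * b (n + 1)‖ * ‖(u - v) * b (n + 1)‖ =
      (4 * (n : ℝ) + 1) * (‖y‖ * ‖y‖) := by
    intro n
    have h := congrArg norm (hCC n)
    rw [CStarRing.norm_star_mul_self, RCLike.norm_nsmul ℝ, CStarRing.norm_star_mul_self] at h
    rw [h, nsmul_eq_mul]
    push_cast
    ring
  have hle : ∀ n : ℕ, ‖(u - v) * b (n + 1)‖ ≤ ‖u - v‖ * ‖b (n + 1)‖ :=
    fun n => norm_mul_le _ _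
  set s : ℝ := ‖u - v‖ with hs
  have hs0 : 0 ≤ s := norm_nonneg _
  have hs4 : s * s < 4 := by nlinarith
  obtain ⟨n, hn⟩ := exists_nat_gt ((s * s - 1) / (4 - s * s))
  have hkey : s * s - 1 < (n : ℝ) * (4 - s * s) := by
    rw [div_lt_iff₀ (by linarith)] at hn
    linarith
  have hineq : (4 * (n : ℝ) + 1) * (‖y‖ * ‖y‖) ≤ (s * s) * (((n : ℝ) + 1) * (‖y‖ * ‖y‖)) := by
    have h0 := hle n
    have h1' : ‖(u - v) * b (n + 1)‖ * ‖(u - v) * b (n + 1)‖ ≤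
        (s * ‖b (n + 1)‖) * (s * ‖b (n + 1)‖) :=
      mul_self_le_mul_self (norm_nonneg _) h0
    have h2' := hnormC n
    have h3' := hnormb (n + 1)
    push_cast at h3'
    nlinarith [norm_nonneg (b (n + 1))]
  have hyy : ‖y‖ * ‖y‖ ≤ 0 := by nlinarith [mul_nonneg (norm_nonneg y) (norm_nonneg y)]
  have : ‖y‖ = 0 := by nlinarith [norm_nonneg y]
  exact norm_eq_zero.mp this


lemma defect_orth (u v : A) (hu : IsExtremalPartialIsometry u)
    (hv : IsExtremalPartialIsometry v) (hd : ‖u - v‖ < 2) (a : A) :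
    (1 - u * star u) * a * (1 - star v * v) = 0 := by
  have hpv : v * star v * v = v := hv.1
  have hEu : ∀ c : A, (1 - star u * u) * c * (1 - u * star u) = 0 := by
    intro c
    have h := congrArg star (kadison_defect u hu (star c))
    simpa [star_mul, star_sub, star_one, star_star, mul_assoc] using h
  set x : A := (1 - u * star u) * a * (1 - star v * v) with hxdef
  have hxs : star x = (1 - star v * v) * star a * (1 - u * star u) := by
    rw [hxdef]
    simp only [star_mul, star_sub, star_one, star_star]
    noncomm_ring
  suffices h : star x = 0 by
    have := congrArg star h
    rwa [star_star, star_zero] at this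
  apply chain_bound u v (star x) ?_ ?_ ?_ hd
  · intro c
    rw [hxs]
    have h := hEu (c * ((1 - star v * v) * star a))
    calc (1 - star u * u) * (c * ((1 - star v * v) * star a * (1 - u * star u)))
        = (1 - star u * u) * (c * ((1 - star v * v) * star a)) * (1 - u * star u) := by
          noncomm_ring
      _ = 0 := h
  · intro c
    rw [hxs]
    have h := kadison_defect v hv c
    calc (1 - v * star v) * (c * ((1 - star v * v) * star a * (1 - u * star u)))
        = ((1 - v * star v) * c * (1 - star v * v)) * (star a * (1 - u * star u)) := by
          noncomm_ring
      _ = 0 := by rw [h, zero_mul]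
  · rw [hxs]
    have hvq : v * (1 - star v * v) = 0 := by
      rw [mul_sub, mul_one]
      have h' : v * (star v * v) = v := by rw [← mul_assoc, hpv]
      rw [h', sub_self]
    calc v * ((1 - star v * v) * star a * (1 - u * star u))
        = (v * (1 - star v * v)) * (star a * (1 - u * star u)) := by noncomm_ring
      _ = 0 := by rw [hvq, zero_mul]

lemma ideal_mul_zero (p q : A) (h : ∀ b : A, p * b * q = 0) :
    ∀ x ∈ closedIdealGen p, ∀ y ∈ closedIdealGen q, x * y = 0 := by
  -- the two-sided ideal of elements annihilating `A * q` on the left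
  set S : TwoSidedIdeal A := TwoSidedIdeal.mk' {m : A | ∀ b : A, m * b * q = 0}
    (fun b => by rw [zero_mul, zero_mul])
    (fun {x y} hx hy b => by rw [add_mul, add_mul, hx b, hy b, add_zero])
    (fun {x} hx b => by rw [neg_mul, neg_mul, hx b, neg_zero])
    (fun {x y} hy b => by
      have h' := hy b
      calc x * y * b * q = x * (y * b * q) := by noncomm_ring
        _ = 0 := by rw [h', mul_zero])
    (fun {x y} hx b => by
      have h' := hx (y * b)
      calc x * y * b * q = x * (y * b) * q := by noncomm_ring
        _ = 0 := h') with hS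
  have step1 : ∀ x ∈ closedIdealGen p, ∀ b : A, x * b * q = 0 := by
    intro x hx b
    have hclosed : IsClosed {m : A | m * b * q = 0} :=
      isClosed_eq (by fun_prop) continuous_const
    have hsub : (TwoSidedIdeal.span {p} : Set A) ⊆ {m : A | m * b * q = 0} := by
      intro m hm
      rw [SetLike.mem_coe] at hm
      have hmS : m ∈ S := TwoSidedIdeal.mem_span_iff.mp hm S (by
        intro t ht
        rw [Set.mem_singleton_iff] at ht
        subst ht
        rw [SetLike.mem_coe, hS, TwoSidedIdeal.mem_mk']
        exact h)
      rw [hS, TwoSidedIdeal.mem_mk'] at hmS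
      exact hmS b
    exact closure_minimal hsub hclosed hx
  -- closedIdealGen p is stable under right multiplication
  have hCr : ∀ m ∈ closedIdealGen p, ∀ c : A, m * c ∈ closedIdealGen p := by
    intro m hm c
    have hcont : Continuous fun t : A => t * c := by fun_prop
    have hmap : Set.MapsTo (fun t : A => t * c)
        (TwoSidedIdeal.span {p} : Set A) (TwoSidedIdeal.span {p} : Set A) := by
      intro t ht
      rw [SetLike.mem_coe] at ht ⊢
      exact TwoSidedIdeal.mul_mem_right _ _ _ ht
    exact map_mem_closure (f := fun t : A => t * c) hcont hm hmap
  intro x hx y hy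
  -- the ideal of elements annihilated on the left by closedIdealGen p
  set T : TwoSidedIdeal A := TwoSidedIdeal.mk'
    {m : A | ∀ x' ∈ closedIdealGen p, x' * m = 0}
    (fun x' _ => by rw [mul_zero])
    (fun {m₁ m₂} h1 h2 x' hx' => by rw [mul_add, h1 x' hx', h2 x' hx', add_zero])
    (fun {m} hm x' hx' => by rw [mul_neg, hm x' hx', neg_zero])
    (fun {c m} hm x' hx' => by
      have := hm (x' * c) (hCr x' hx' c)
      rw [← mul_assoc]
      exact this)
    (fun {m c} hm x' hx' => by rw [← mul_assoc, hm x' hx', zero_mul]) with hT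
  have hTclosed : IsClosed {m : A | ∀ x' ∈ closedIdealGen p, x' * m = 0} := by
    have : {m : A | ∀ x' ∈ closedIdealGen p, x' * m = 0} =
        ⋂ x' ∈ closedIdealGen p, {m : A | x' * m = 0} := by
      ext m
      simp [Set.mem_iInter]
    rw [this]
    exact isClosed_biInter fun x' _ => isClosed_eq (by fun_prop) continuous_const
  have hsub : (TwoSidedIdeal.span {q} : Set A) ⊆
      {m : A | ∀ x' ∈ closedIdealGen p, x' * m = 0} := by
    intro m hm
    rw [SetLike.mem_coe] at hm
    have hmT : m ∈ T := TwoSidedIdeal.mem_span_iff.mp hm T (by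
      intro t ht
      rw [Set.mem_singleton_iff] at ht
      subst ht
      rw [SetLike.mem_coe, hT, TwoSidedIdeal.mem_mk']
      intro x' hx'
      have := step1 x' hx' 1
      rwa [mul_one] at this)
    rw [hT, TwoSidedIdeal.mem_mk'] at hmT
    exact hmT
  have hyT : y ∈ {m : A | ∀ x' ∈ closedIdealGen p, x' * m = 0} :=
    closure_minimal hsub hTclosed hy
  exact hyT x hx


end Auxiliary

/-- If `u` and `v` are extremal partial isometries in a unital C*-algebra with
`‖u − v‖ < 2`, `I₁` is the closed ideal generated by the left defect projection
`1 − uu*` of `u`, `J₁` the closed ideal generated by `1 − u*u`, and similarly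
`I₂`, `J₂` for `v`, then `I₁·J₂ = {0}` and `I₂·J₁ = {0}`. -/
theorem defectIdeals_mul_eq_zero_of_norm_sub_lt_two
    {A : Type*} [CStarAlgebra A] (u v : A)
    (hu : IsExtremalPartialIsometry u) (hv : IsExtremalPartialIsometry v)
    (hd : ‖u - v‖ < 2) :
    (∀ x ∈ closedIdealGen (1 - u * star u), ∀ y ∈ closedIdealGen (1 - star v * v),
      x * y = 0) ∧
    (∀ x ∈ closedIdealGen (1 - v * star v), ∀ y ∈ closedIdealGen (1 - star u * u),
      x * y = 0) := by
  constructor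
  · exact ideal_mul_zero _ _ fun b => defect_orth u v hu hv hd b
  · exact ideal_mul_zero _ _ fun b => defect_orth v u hv hu (by rwa [norm_sub_rev]) b
end

section
/- Let A be a unital C*-algebra and let u, v ∈ A be extremal partial isometries with ‖u − v‖ < 2. Then u and v have the same defect ideals: the closed two-sided ideal of A generated by 1 − uu* equals the closed two-sided ideal generated by 1 − vv*, and the closed two-sided ideal generated by 1 − u*u equals the closed two-sided ideal generated by 1 − v*v. -/
section AuxiliaryProofs

open Pointwise

variable {A : Type*} [CStarAlgebra A]

def cIdeal (s : Set A) : TwoSidedIdeal A :=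
  TwoSidedIdeal.mk' (closure (TwoSidedIdeal.span s : Set A))
    (subset_closure (SetLike.mem_coe.2 (TwoSidedIdeal.zero_mem _)))
    (fun hx hy => map_mem_closure₂ continuous_add hx hy fun _ ha _ hb =>
      SetLike.mem_coe.2 (TwoSidedIdeal.add_mem _ (SetLike.mem_coe.1 ha) (SetLike.mem_coe.1 hb)))
    (fun hx => map_mem_closure continuous_neg hx fun _ ha =>
      SetLike.mem_coe.2 (TwoSidedIdeal.neg_mem _ (SetLike.mem_coe.1 ha)))
    (fun {x _} hy => map_mem_closure (continuous_mul_left x) hy fun _ ha =>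
      SetLike.mem_coe.2 (TwoSidedIdeal.mul_mem_left _ _ _ (SetLike.mem_coe.1 ha)))
    (fun {_ y} hx => map_mem_closure (f := (· * y)) (continuous_mul_right y) hx fun _ ha =>
      SetLike.mem_coe.2 (TwoSidedIdeal.mul_mem_right _ _ _ (SetLike.mem_coe.1 ha)))

lemma cIdeal_coe (s : Set A) :
    (cIdeal s : Set A) = closure (TwoSidedIdeal.span s : Set A) :=
  TwoSidedIdeal.coe_mk' _ _ _ _ _ _

lemma cIdeal_mem (s : Set A) (x : A) :
    x ∈ cIdeal s ↔ x ∈ closure (TwoSidedIdeal.span s : Set A) :=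
  TwoSidedIdeal.mem_mk' _ _ _ _ _ _ _

lemma norm_le_one_of_extremal {u : A} (hu : IsExtremalPartialIsometry u) : ‖u‖ ≤ 1 := by
  have h := hu.2.1
  rwa [Metric.mem_closedBall, dist_zero_right] at h


lemma closedIdealGen_mono {a b : A} (h : a ∈ closedIdealGen b) :
    closedIdealGen a ⊆ closedIdealGen b := by
  have hsub : (TwoSidedIdeal.span {a} : Set A) ⊆ (cIdeal {b} : Set A) := by
    intro x hx
    rw [SetLike.mem_coe] at hx ⊢
    refine TwoSidedIdeal.mem_span_iff.1 hx (cIdeal {b}) ?_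
    intro y hy
    rw [Set.mem_singleton_iff] at hy
    subst hy
    exact SetLike.mem_coe.2 ((cIdeal_mem _ _).2 h)
  have hc : closure (TwoSidedIdeal.span {a} : Set A) ⊆ (cIdeal {b} : Set A) :=
    closure_minimal hsub (by rw [cIdeal_coe]; exact isClosed_closure)
  intro x hx
  have h2 := hc hx
  rwa [cIdeal_coe] at h2

lemma IsExtremalPartialIsometry.star' {u : A} (hu : IsExtremalPartialIsometry u) :
    IsExtremalPartialIsometry (star u) := by
  constructor
  · show star u * star (star u) * star u = star u
    rw [star_star]
    have h := congrArg star hu.1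
    simp only [star_mul, star_star, ← mul_assoc] at h
    exact h
  · obtain ⟨hmem, hext⟩ := hu.2
    constructor
    · rw [Metric.mem_closedBall, dist_zero_right, norm_star]
      rwa [Metric.mem_closedBall, dist_zero_right] at hmem
    · intro x₁ hx₁ x₂ hx₂ hseg
      obtain ⟨α, β, hα, hβ, hαβ, heq⟩ := hseg
      have hseg' : u ∈ openSegment ℝ (star x₁) (star x₂) := by
        refine ⟨α, β, hα, hβ, hαβ, ?_⟩
        have h2 := congrArg star heq
        simpa [star_add, star_smul] using h2
      have hm1 : star x₁ ∈ Metric.closedBall (0:A) 1 := by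
        rw [Metric.mem_closedBall, dist_zero_right, norm_star]
        rwa [Metric.mem_closedBall, dist_zero_right] at hx₁
      have hm2 : star x₂ ∈ Metric.closedBall (0:A) 1 := by
        rw [Metric.mem_closedBall, dist_zero_right, norm_star]
        rwa [Metric.mem_closedBall, dist_zero_right] at hx₂
      have e1 := hext hm1 hm2 hseg'
      rw [← star_star x₁, e1]

variable [PartialOrder A] [StarOrderedRing A]

lemma sqq_le_self {a : A} (h0 : 0 ≤ a) (h1 : a ≤ 1) : a * a ≤ a := by
  obtain ⟨b, hb0, hb⟩ : ∃ b, 0 ≤ b ∧ b * b = a :=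
    ⟨CFC.sqrt a, CFC.sqrt_nonneg (a := a), CFC.sqrt_mul_sqrt_self a h0⟩
  subst hb
  calc b * b * (b * b) = b * (b * b) * b := by noncomm_ring
    _ ≤ b * 1 * b := conjugate_le_conjugate_of_nonneg h1 hb0
    _ = b * b := by noncomm_ring

lemma norm_le_one_of_sq_le {s : A} (h0 : 0 ≤ s) (h : s * s ≤ s) : ‖s‖ ≤ 1 := by
  have hsa : IsSelfAdjoint s := .of_nonneg h0
  have h2 : ‖s * s‖ ≤ ‖s‖ :=
    CStarAlgebra.norm_le_norm_of_nonneg_of_le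
      (by simpa [hsa.star_eq] using star_mul_self_nonneg s) h
  have h3 : ‖star s * s‖ = ‖s‖ * ‖s‖ := CStarRing.norm_star_mul_self
  rw [hsa.star_eq] at h3
  rw [h3] at h2
  nlinarith [norm_nonneg s]

lemma le_one_of_norm_le {a : A} (h1 : ‖a‖ ≤ 1) (ha : IsSelfAdjoint a) : a ≤ 1 := by
  refine le_trans ha.le_algebraMap_norm_self ?_
  rw [Algebra.algebraMap_eq_smul_one]
  have : (0:A) ≤ (1 - ‖a‖) • (1 : A) := smul_nonneg (by linarith) zero_le_one
  rw [sub_smul, one_smul, sub_nonneg] at this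
  exact this

/-- Kadison: an extreme point of the unit ball which is a partial isometry satisfies
`(1 - u u*) A (1 - u* u) = 0`. -/
lemma kadison {u : A} (hu : IsExtremalPartialIsometry u) (a : A) :
    (1 - u * star u) * a * (1 - star u * u) = 0 := by
  obtain ⟨hpi, hext⟩ := hu
  have hpi : u * star u * u = u := hpi
  have hpi' : star u * u * star u = star u := by
    have h := congrArg star hpi
    simp only [star_mul, star_star, ← mul_assoc] at h
    exact h
  have r1 : u * (star u * u) = u := by rw [← mul_assoc]; exact hpi
  have r2 : star u * (u * star u) = star u := by rw [← mul_assoc]; exact hpi'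
  have m1 : ∀ x : A, u * (star u * (u * x)) = u * x := fun x => by
    rw [← mul_assoc, ← mul_assoc, hpi]
  have m2 : ∀ x : A, star u * (u * (star u * x)) = star u * x := fun x => by
    rw [← mul_assoc, ← mul_assoc, hpi']
  suffices key : ∀ b : A, ‖(1 - u * star u) * b * (1 - star u * u)‖ ≤ 1 →
      (1 - u * star u) * b * (1 - star u * u) = 0 by
    rcases eq_or_ne ((1 - u * star u) * a * (1 - star u * u)) 0 with h | h
    · exact h
    · have hnz : ‖(1 - u * star u) * a * (1 - star u * u)‖ ≠ 0 := by simpa using h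
      have h2 : (1 - u * star u) * ((‖(1 - u * star u) * a * (1 - star u * u)‖⁻¹ : ℝ) • a) *
          (1 - star u * u)
          = (‖(1 - u * star u) * a * (1 - star u * u)‖⁻¹ : ℝ) •
            ((1 - u * star u) * a * (1 - star u * u)) := by
        rw [mul_smul_comm, smul_mul_assoc]
      have h3 := key _ (by
        rw [h2, norm_smul, norm_inv, Real.norm_eq_abs, abs_norm, inv_mul_cancel₀ hnz])
      rw [h2, smul_eq_zero] at h3
      rcases h3 with h3 | h3
      · exact absurd (inv_eq_zero.mp h3) hnz
      · exact h3
  intro b hb1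
  obtain ⟨p, hp⟩ : ∃ p : A, p = 1 - u * star u := ⟨_, rfl⟩
  obtain ⟨q, hq⟩ : ∃ q : A, q = 1 - star u * u := ⟨_, rfl⟩
  obtain ⟨z, hz⟩ : ∃ z : A, z = p * b * q := ⟨_, rfl⟩
  obtain ⟨s, hs⟩ : ∃ s : A, s = star u * u := ⟨_, rfl⟩
  obtain ⟨t, ht⟩ : ∃ t : A, t = star z * z := ⟨_, rfl⟩
  rw [← hp, ← hq, ← hz] at hb1 ⊢
  have hpsa : star p = p := by rw [hp]; simp only [star_sub, star_one, star_mul, star_star]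
  have hqsa : star q = q := by rw [hq]; simp only [star_sub, star_one, star_mul, star_star]
  have hzstar : star z = q * star b * p := by
    rw [hz, star_mul, star_mul, hpsa, hqsa, mul_assoc]
  have hss : s * s = s := by
    rw [hs]; simp only [mul_assoc, m2]
  have hcross1 : star u * z = 0 := by
    rw [hz, hp, hq]
    simp only [mul_sub, sub_mul, mul_one, one_mul, mul_assoc, r2, m2, sub_self, zero_mul,
      mul_zero, sub_zero, zero_sub, neg_zero]
  have hcross2 : star z * u = 0 := by
    rw [hzstar, hp, hq]
    simp only [mul_sub, sub_mul, mul_one, one_mul, mul_assoc, r1, m1, sub_self, zero_mul,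
      mul_zero, sub_zero, zero_sub, neg_zero]
  have hst : s * t = 0 := by
    rw [ht, hzstar, hs, hq, hp]
    simp only [mul_sub, sub_mul, mul_one, one_mul, mul_assoc, r1, r2, m1, m2, sub_self, zero_mul,
      mul_zero, sub_zero, zero_sub, neg_zero, neg_mul, mul_neg, neg_neg]
  have hts : t * s = 0 := by
    rw [ht, hz, hs, hq]
    simp only [mul_sub, sub_mul, mul_one, one_mul, mul_assoc, r1, r2, m1, m2, sub_self, zero_mul,
      mul_zero, sub_zero, zero_sub, neg_zero, neg_mul, mul_neg, neg_neg]
  have ht0 : (0:A) ≤ t := by rw [ht]; exact star_mul_self_nonneg z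
  have hs0 : (0:A) ≤ s := by rw [hs]; exact star_mul_self_nonneg u
  have ht1 : t ≤ 1 := by
    refine le_one_of_norm_le ?_ (by rw [ht]; exact IsSelfAdjoint.star_mul_self z)
    rw [ht, CStarRing.norm_star_mul_self]
    calc ‖z‖ * ‖z‖ ≤ 1 * 1 := mul_le_mul hb1 hb1 (norm_nonneg z) zero_le_one
      _ = 1 := one_mul 1
  have hsum_sq : (s + t) * (s + t) ≤ s + t := by
    have hexp : (s + t) * (s + t) = s * s + (s * t + t * s) + t * t := by noncomm_ring
    rw [hexp, hss, hst, hts, add_zero, add_zero]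
    exact add_le_add le_rfl (sqq_le_self ht0 ht1)
  have hsum_norm : ‖s + t‖ ≤ 1 := norm_le_one_of_sq_le (add_nonneg hs0 ht0) hsum_sq
  have hplus : star (u + z) * (u + z) = s + t := by
    rw [star_add, add_mul, mul_add, mul_add, hcross1, hcross2, ← hs, ← ht]
    abel
  have hminus : star (u - z) * (u - z) = s + t := by
    rw [star_sub, sub_mul, mul_sub, mul_sub, hcross1, hcross2, ← hs, ← ht]
    abel
  have hnorm_ball : ∀ w : A, star w * w = s + t → w ∈ Metric.closedBall (0:A) 1 := by
    intro w hw
    rw [Metric.mem_closedBall, dist_zero_right]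
    have h2 : ‖star w * w‖ ≤ 1 := by rw [hw]; exact hsum_norm
    rw [CStarRing.norm_star_mul_self] at h2
    nlinarith [norm_nonneg w]
  have hseg : u ∈ openSegment ℝ (u - z) (u + z) :=
    ⟨1/2, 1/2, by norm_num, by norm_num, by norm_num, by module⟩
  have hfin := hext.2 (hnorm_ball _ hminus) (hnorm_ball _ hplus) hseg
  have hz0 : z = 0 := by
    have h5 := hfin
    rwa [sub_eq_self] at h5
  rw [hz0]

/-- Closed two-sided ideals are hereditary (in the weak form we need). -/
lemma mem_of_le_of_mem' (K : TwoSidedIdeal A) (hKc : IsClosed (K : Set A)) {b c : A}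
    (hb : 0 ≤ b) (hbc : b ≤ c) (hc : c ∈ K) : b ∈ K := by
  have hc0 : 0 ≤ c := hb.trans hbc
  obtain ⟨x, hx0, hxx⟩ : ∃ x, 0 ≤ x ∧ x * x = b :=
    ⟨CFC.sqrt b, CFC.sqrt_nonneg (a := b), CFC.sqrt_mul_sqrt_self b hb⟩
  have hxsa : IsSelfAdjoint x := .of_nonneg hx0
  rw [← SetLike.mem_coe, ← hKc.closure_eq]
  rw [Metric.mem_closure_iff]
  intro ε hε
  set δ : ℝ := (ε / (‖x‖ + 1)) ^ 2 with hδ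
  have hxpos : (0:ℝ) < ‖x‖ + 1 := by positivity
  have hδ0 : 0 < δ := by positivity
  -- the resolvent-type element y = (δ + c)⁻¹
  have hspec : ∀ r ∈ spectrum ℝ c, (0:ℝ) ≤ r := fun r hr => spectrum_nonneg_of_nonneg hc0 hr
  have hcontinv : ContinuousOn (fun r : ℝ => (δ + r)⁻¹) (spectrum ℝ c) := by
    apply ContinuousOn.inv₀ (by fun_prop)
    intro r hr
    have := hspec r hr
    positivity
  obtain ⟨y, hy⟩ : ∃ y : A, y = cfc (fun r : ℝ => (δ + r)⁻¹) c := ⟨_, rfl⟩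
  have hcsa : IsSelfAdjoint c := .of_nonneg hc0
  have hmap : algebraMap ℝ A δ + c = cfc (fun r : ℝ => δ + r) c := by
    rw [cfc_const_add δ (fun r : ℝ => r) c (by fun_prop) hcsa, cfc_id' ℝ c]
  have hy1 : y * (algebraMap ℝ A δ + c) = 1 := by
    rw [hy, hmap, ← cfc_mul _ _ c hcontinv (by fun_prop)]
    rw [show (fun r : ℝ => (δ + r)⁻¹ * (δ + r)) = fun r : ℝ => (δ + r)⁻¹ * (δ + r) from rfl]
    have : cfc (fun r : ℝ => (δ + r)⁻¹ * (δ + r)) c = cfc (fun _ : ℝ => (1:ℝ)) c := by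
      apply cfc_congr
      intro r hr
      have := hspec r hr
      field_simp
    rw [this, cfc_const 1 c hcsa, map_one]
  have h1y : (algebraMap ℝ A δ + c) * y = 1 := by
    rw [hy, hmap, ← cfc_mul _ _ c (by fun_prop) hcontinv]
    have : cfc (fun r : ℝ => (δ + r) * (δ + r)⁻¹) c = cfc (fun _ : ℝ => (1:ℝ)) c := by
      apply cfc_congr
      intro r hr
      have := hspec r hr
      field_simp
    rw [this, cfc_const 1 c hcsa, map_one]
  have hy0 : 0 ≤ y := by
    rw [hy]
    apply cfc_nonneg
    intro r hr
    have := hspec r hr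
    positivity
  have hysa : IsSelfAdjoint y := .of_nonneg hy0
  have hynorm : ‖y‖ ≤ δ⁻¹ := by
    rw [hy]
    apply norm_cfc_le (by positivity)
    intro r hr
    have h1 := hspec r hr
    rw [Real.norm_eq_abs, abs_of_nonneg (by positivity)]
    exact inv_anti₀ hδ0 (by linarith)
  -- the key norm bound : ‖x * y‖^2 ≤ ‖y‖
  have hyby : y * b * y ≤ y := by
    calc y * b * y ≤ y * c * y := hysa.conjugate_le_conjugate hbc
      _ ≤ y * (algebraMap ℝ A δ + c) * y := by
          refine hysa.conjugate_le_conjugate ?_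
          have : (0:A) ≤ algebraMap ℝ A δ := by
            rw [Algebra.algebraMap_eq_smul_one]
            exact smul_nonneg hδ0.le zero_le_one
          exact le_add_of_nonneg_left this
      _ = y := by rw [mul_assoc, ← mul_assoc, hy1, one_mul]
  have hyby0 : (0:A) ≤ y * b * y := conjugate_nonneg_of_nonneg hb hy0
  have hxy2 : ‖x * y‖ * ‖x * y‖ ≤ δ⁻¹ := by
    have hsxy : star (x * y) * (x * y) = y * b * y := by
      rw [star_mul, hysa.star_eq, hxsa.star_eq, ← hxx]
      noncomm_ring
    have h4 : ‖star (x * y) * (x * y)‖ = ‖x * y‖ * ‖x * y‖ := CStarRing.norm_star_mul_self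
    rw [hsxy] at h4
    rw [← h4]
    exact (CStarAlgebra.norm_le_norm_of_nonneg_of_le hyby0 hyby).trans hynorm
  refine ⟨b * y * c, ?_, ?_⟩
  · exact SetLike.mem_coe.2 (K.mul_mem_left _ _ hc)
  · -- distance estimate
    have hyc : y * c = 1 - δ • y := by
      have h5 := hy1
      rw [mul_add] at h5
      have h6 : y * algebraMap ℝ A δ = δ • y := by
        rw [Algebra.algebraMap_eq_smul_one, mul_smul_comm, mul_one]
      rw [h6] at h5
      rw [eq_sub_iff_add_eq, add_comm]
      exact h5
    have hbw : b - b * y * c = δ • (b * y) := by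
      rw [mul_assoc, hyc, mul_sub, mul_one, mul_smul_comm, sub_sub_cancel]
    rw [dist_eq_norm, hbw, norm_smul, Real.norm_eq_abs, abs_of_pos hδ0]
    have hby : ‖b * y‖ ≤ ‖x‖ * ‖x * y‖ := by
      calc ‖b * y‖ = ‖x * (x * y)‖ := by rw [← mul_assoc, hxx]
        _ ≤ ‖x‖ * ‖x * y‖ := norm_mul_le _ _
    set e : ℝ := ε / (‖x‖ + 1) with he
    have he0 : 0 < e := by positivity
    have hδe : δ = e * e := by rw [hδ, he, sq]
    have hti : ‖x * y‖ ≤ e⁻¹ := by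
      have h7 : ‖x * y‖ ^ 2 ≤ (e⁻¹) ^ 2 := by
        rw [sq, sq]
        calc ‖x * y‖ * ‖x * y‖ ≤ δ⁻¹ := hxy2
          _ = e⁻¹ * e⁻¹ := by rw [hδe, mul_inv]
      have := pow_le_pow_left₀ (norm_nonneg (x*y)) (le_refl ‖x*y‖) 2
      nlinarith [norm_nonneg (x * y), inv_pos.2 he0]
    calc δ * ‖b * y‖ ≤ δ * (‖x‖ * ‖x * y‖) := by
          exact mul_le_mul_of_nonneg_left hby hδ0.le
      _ ≤ e * e * (‖x‖ * e⁻¹) := by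
          rw [hδe]
          refine mul_le_mul_of_nonneg_left ?_ (by positivity)
          exact mul_le_mul_of_nonneg_left hti (norm_nonneg x)
      _ = e * ‖x‖ := by field_simp
      _ < ε := by
          rw [he, div_mul_eq_mul_div, div_lt_iff₀ hxpos]
          nlinarith

lemma defect_mem {u v : A} (hu : IsExtremalPartialIsometry u) (hv : IsExtremalPartialIsometry v)
    (hd : ‖u - v‖ < 2) : 1 - u * star u ∈ closedIdealGen (1 - v * star v) := by
  have hnu : ‖u‖ ≤ 1 := norm_le_one_of_extremal hu
  have hnv : ‖v‖ ≤ 1 := norm_le_one_of_extremal hv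
  rcases subsingleton_or_nontrivial A with hA | hA
  · have h0 : (1 - u * star u : A) = 0 := Subsingleton.elim _ _
    rw [h0]
    exact subset_closure (SetLike.mem_coe.2 (TwoSidedIdeal.zero_mem _))
  have hpi : u * star u * u = u := hu.1
  have hpp : (u * star u) * (u * star u) = u * star u := by rw [← mul_assoc, hpi]
  have hpp' : (1 - u * star u) * (1 - u * star u) = 1 - u * star u := by
    rw [mul_sub, mul_one, sub_mul, one_mul, hpp, sub_self, sub_zero]
  obtain ⟨δ, hδdef⟩ : ∃ δ : ℝ, δ = ‖u - v‖ := ⟨_, rfl⟩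
  have hδ0 : 0 ≤ δ := hδdef ▸ norm_nonneg _
  have hδ2 : δ < 2 := hδdef ▸ hd
  obtain ⟨K, hK⟩ : ∃ K : TwoSidedIdeal A, K = cIdeal {1 - v * star v, 1 - star u * u} := ⟨_, rfl⟩
  have hKc : IsClosed (K : Set A) := by rw [hK, cIdeal_coe]; exact isClosed_closure
  have hg1K : (1 - v * star v) ∈ K := by
    rw [hK]
    exact (cIdeal_mem _ _).2 (subset_closure (TwoSidedIdeal.subset_span (by simp)))
  have hqK : (1 - star u * u) ∈ K := by
    rw [hK]
    exact (cIdeal_mem _ _).2 (subset_closure (TwoSidedIdeal.subset_span (by simp)))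
  obtain ⟨φ, hφ⟩ : ∃ φ : A →+* K.ringCon.Quotient, φ = K.ringCon.mk' := ⟨_, rfl⟩
  have hker : ∀ x : A, x ∈ K ↔ φ x = 0 := by
    intro x
    have h0 : φ x = (x : K.ringCon.Quotient) := by rw [hφ]; rfl
    have h1 : (0 : K.ringCon.Quotient) = ((0:A) : K.ringCon.Quotient) := rfl
    rw [h0, h1, RingCon.eq]
    exact ⟨fun h => h, fun h => h⟩
  -- the contraction W = u* v is invertible modulo K
  obtain ⟨W, hW⟩ : ∃ W : A, W = star u * v := ⟨_, rfl⟩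
  have hWvu : 1 - W * (star v * u) ∈ K := by
    have hid : 1 - W * (star v * u) =
        (1 - star u * u) + star u * (1 - v * star v) * u := by rw [hW]; noncomm_ring
    rw [hid]
    exact K.add_mem hqK (K.mul_mem_right _ _ (K.mul_mem_left _ _ hg1K))
  have hφWvu : φ W * φ (star v * u) = 1 := by
    have h2 := (hker _).1 hWvu
    rw [map_sub, map_one, map_mul, sub_eq_zero] at h2
    exact h2.symm
  -- z₁ is invertible in A
  obtain ⟨m, hm⟩ : ∃ m : A, m = star u * (u - v) := ⟨_, rfl⟩
  have hmnorm : ‖m‖ ≤ δ := by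
    rw [hm, hδdef]
    calc ‖star u * (u - v)‖ ≤ ‖star u‖ * ‖u - v‖ := norm_mul_le _ _
      _ ≤ 1 * ‖u - v‖ := by
          apply mul_le_mul_of_nonneg_right _ (norm_nonneg _)
          rwa [norm_star]
      _ = ‖u - v‖ := one_mul _
  have hc1pos : (0:ℝ) < 1 + δ/2 := by linarith
  obtain ⟨z₁, hz₁⟩ : ∃ z₁ : A,
      z₁ = algebraMap ℝ A (1 + δ/2) * (1 - algebraMap ℝ A ((1 + δ/2)⁻¹) * m) := ⟨_, rfl⟩
  have hz₁unit : IsUnit z₁ := by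
    rw [hz₁]
    refine IsUnit.mul ?_ (isUnit_one_sub_of_norm_lt_one ?_)
    · exact (isUnit_iff_ne_zero.2 hc1pos.ne').map (algebraMap ℝ A)
    · calc ‖algebraMap ℝ A ((1 + δ/2)⁻¹) * m‖ ≤ ‖algebraMap ℝ A ((1 + δ/2)⁻¹)‖ * ‖m‖ :=
            norm_mul_le _ _
        _ ≤ (1 + δ/2)⁻¹ * δ := by
            apply mul_le_mul _ hmnorm (norm_nonneg _) (by positivity)
            rw [norm_algebraMap']
            rw [Real.norm_eq_abs, abs_of_pos (by positivity)]
        _ < 1 := by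
            rw [inv_mul_lt_iff₀ hc1pos, mul_one]
            linarith
  have hz₁eq : z₁ = W + algebraMap ℝ A (δ/2) + (1 - star u * u) := by
    rw [hz₁, mul_sub, mul_one, ← mul_assoc, ← map_mul, mul_inv_cancel₀ hc1pos.ne', map_one,
      one_mul, hm, hW, mul_sub]
    have : algebraMap ℝ A (1 + δ/2) = 1 + algebraMap ℝ A (δ/2) := by
      rw [map_add, map_one]
    rw [this]
    abel
  -- z₂
  obtain ⟨z₂, hz₂⟩ : ∃ z₂ : A, z₂ = 1 + algebraMap ℝ A (δ/2) * (star v * u) := ⟨_, rfl⟩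
  have hz₂unit : IsUnit z₂ := by
    have h3 : ‖-(algebraMap ℝ A (δ/2) * (star v * u))‖ < 1 := by
      rw [norm_neg]
      calc ‖algebraMap ℝ A (δ/2) * (star v * u)‖
          ≤ ‖algebraMap ℝ A (δ/2)‖ * ‖star v * u‖ := norm_mul_le _ _
        _ ≤ (δ/2) * 1 := by
            apply mul_le_mul
            · rw [norm_algebraMap', Real.norm_eq_abs, abs_of_nonneg (by linarith)]
            · calc ‖star v * u‖ ≤ ‖star v‖ * ‖u‖ := norm_mul_le _ _
                _ ≤ 1 * 1 := by
                    apply mul_le_mul _ hnu (norm_nonneg _) zero_le_one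
                    rwa [norm_star]
                _ = 1 := one_mul 1
            · exact norm_nonneg _
            · linarith
        _ < 1 := by linarith
    have h4 := isUnit_one_sub_of_norm_lt_one h3
    rwa [sub_neg_eq_add, ← hz₂] at h4
  -- φ W is a unit
  have hWz₂ : φ (W * z₂) = φ z₁ := by
    have hWz₂eq : W * z₂ = W + algebraMap ℝ A (δ/2) * (W * (star v * u)) := by
      rw [hz₂, mul_add, mul_one, ← mul_assoc, ← Algebra.commutes (δ/2) W, mul_assoc]
    rw [hWz₂eq, hz₁eq]
    rw [map_add, map_add, map_add, map_mul, map_mul, hφWvu, mul_one]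
    rw [(hker _).1 hqK, add_zero]
  have hφWunit : IsUnit (φ W) := by
    obtain ⟨ζ₂, hζ₂⟩ := hz₂unit.map φ
    have h5 : φ W = φ z₁ * ↑ζ₂⁻¹ := by
      calc φ W = φ W * (↑ζ₂ * ↑ζ₂⁻¹) := by rw [Units.mul_inv, mul_one]
        _ = (φ W * ↑ζ₂) * ↑ζ₂⁻¹ := by rw [mul_assoc]
        _ = φ z₁ * ↑ζ₂⁻¹ := by rw [hζ₂, ← map_mul, hWz₂]
    rw [h5]
    exact (hz₁unit.map φ).mul ζ₂⁻¹.isUnit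
  have hsWW : 1 - star W * W ∈ K := by
    obtain ⟨Wu, hWu⟩ := hφWunit
    have hWsW : φ W * φ (star W) = 1 := by
      have : star W = star v * u := by rw [hW, star_mul, star_star]
      rw [this]
      exact hφWvu
    have hinv : (↑Wu⁻¹ : K.ringCon.Quotient) = φ (star W) := by
      apply Units.inv_eq_of_mul_eq_one_right
      rw [hWu]
      exact hWsW
    apply (hker _).2
    rw [map_sub, map_one, map_mul, ← hinv, ← hWu, Units.inv_mul, sub_self]
  -- hereditarity gives star v * p * v ∈ K
  have hp0 : (0:A) ≤ 1 - u * star u := by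
    have hpsa : star (1 - u * star u) = 1 - u * star u := by
      simp only [star_sub, star_one, star_mul, star_star]
    have h6 : 1 - u * star u = star (1 - u * star u) * (1 - u * star u) := by
      rw [hpsa, mul_sub, mul_one, sub_mul, one_mul, hpp, sub_self, sub_zero]
    rw [h6]
    exact star_mul_self_nonneg _
  have hb0 : (0:A) ≤ star v * (1 - u * star u) * v := star_left_conjugate_nonneg hp0 v
  have hble : star v * (1 - u * star u) * v ≤ 1 - star W * W := by
    rw [← sub_nonneg]
    have hkey : (1 - star W * W) - star v * (1 - u * star u) * v = 1 - star v * v := by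
      rw [hW, star_mul, star_star]
      noncomm_ring
    rw [hkey, sub_nonneg]
    apply le_one_of_norm_le
    · rw [CStarRing.norm_star_mul_self]
      calc ‖v‖ * ‖v‖ ≤ 1 * 1 := mul_le_mul hnv hnv (norm_nonneg v) zero_le_one
        _ = 1 := one_mul 1
    · exact IsSelfAdjoint.star_mul_self v
  have hbK : star v * (1 - u * star u) * v ∈ K := mem_of_le_of_mem' K hKc hb0 hble hsWW
  -- conclude p ∈ K
  obtain ⟨c, hc⟩ : ∃ c : A,
      c = (1 - u * star u) * (v * star v) * (1 - u * star u) := ⟨_, rfl⟩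
  have hccK : c * c ∈ K := by
    have h7 : c * c = ((1 - u * star u) * v) * (star v * (1 - u * star u) * v) *
        (star v * (1 - u * star u)) := by
      have h8 : c * c = (1 - u * star u) * (v * star v) *
          ((1 - u * star u) * (1 - u * star u)) * (v * star v) * (1 - u * star u) := by
        rw [hc]; noncomm_ring
      rw [hpp'] at h8
      rw [h8]
      noncomm_ring
    rw [h7]
    exact K.mul_mem_right _ _ (K.mul_mem_left _ _ hbK)
  have hpcK : (1 - u * star u) - c ∈ K := by
    have h9 : (1 - u * star u) * (1 - v * star v) * (1 - u * star u)
        = (1 - u * star u) - c := by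
      have h10 : (1 - u * star u) * (1 - v * star v) * (1 - u * star u)
          = (1 - u * star u) * (1 - u * star u) - c := by rw [hc]; noncomm_ring
      rw [h10, hpp']
    rw [← h9]
    exact K.mul_mem_right _ _ (K.mul_mem_left _ _ hg1K)
  have hpK : (1 - u * star u) ∈ K := by
    have h11 : 1 - u * star u =
        (1 - u * star u) * ((1 - u * star u) - c) + ((1 - u * star u) - c) * c + c * c := by
      have h12 : (1 - u * star u) * ((1 - u * star u) - c) + ((1 - u * star u) - c) * c + c * c
          = (1 - u * star u) * (1 - u * star u) := by noncomm_ring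
      rw [h12, hpp']
    rw [h11]
    exact K.add_mem (K.add_mem (K.mul_mem_left _ _ hpcK) (K.mul_mem_right _ _ hpcK)) hccK
  -- multiply by p and land in the ideal generated by 1 - v v*
  have hmaps : Set.MapsTo (fun x => (1 - u * star u) * x)
      (TwoSidedIdeal.span {1 - v * star v, 1 - star u * u} : Set A)
      (TwoSidedIdeal.span {1 - v * star v} : Set A) := by
    intro x hx
    rw [SetLike.mem_coe, TwoSidedIdeal.mem_span_iff_mem_addSubgroup_closure] at hx
    simp only [Set.mem_setOf_eq]
    induction hx using AddSubgroup.closure_induction with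
    | mem w hw =>
      obtain ⟨w1, hw1, s1, -, rfl⟩ := hw
      obtain ⟨r, -, g, hg, rfl⟩ := hw1
      rcases hg with hg | hg
      · subst hg
        refine SetLike.mem_coe.2 ?_
        exact TwoSidedIdeal.mul_mem_left _ _ _
          (TwoSidedIdeal.mul_mem_right _ _ _
            (TwoSidedIdeal.mul_mem_left _ _ _ (TwoSidedIdeal.subset_span rfl)))
      · rw [Set.mem_singleton_iff] at hg
        subst hg
        have h13 : (1 - u * star u) * (r * (1 - star u * u) * s1) = 0 := by
          rw [show r * (1 - star u * u) * s1 = r * ((1 - star u * u) * s1) from mul_assoc _ _ _,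
            ← mul_assoc, ← mul_assoc, kadison hu r, zero_mul]
        rw [h13]
        exact SetLike.mem_coe.2 (TwoSidedIdeal.zero_mem _)
    | zero => simpa using SetLike.mem_coe.2 (TwoSidedIdeal.zero_mem (TwoSidedIdeal.span {1 - v * star v}))
    | add x y hx hy ihx ihy =>
      rw [mul_add]
      exact SetLike.mem_coe.2
        (TwoSidedIdeal.add_mem _ (SetLike.mem_coe.1 ihx) (SetLike.mem_coe.1 ihy))
    | neg x hx ihx =>
      rw [mul_neg]
      exact SetLike.mem_coe.2 (TwoSidedIdeal.neg_mem _ (SetLike.mem_coe.1 ihx))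
  have hmem : (1 - u * star u) ∈
      closure (TwoSidedIdeal.span {1 - v * star v, 1 - star u * u} : Set A) := by
    rw [hK] at hpK
    exact (cIdeal_mem _ _).1 hpK
  have hfinal := map_mem_closure (continuous_mul_left (1 - u * star u)) hmem hmaps
  rw [hpp'] at hfinal
  exact hfinal

end AuxiliaryProofs

/-- **Corollary 6.** If `u` and `v` are extremal partial isometries in a unital
C*-algebra with `‖u − v‖ < 2`, then `u` and `v` have the same left defect ideals
and the same right defect ideals. -/
theorem defectIdeals_eq_of_norm_sub_lt_two
    {A : Type*} [CStarAlgebra A] (u v : A)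
    (hu : IsExtremalPartialIsometry u) (hv : IsExtremalPartialIsometry v)
    (hd : ‖u - v‖ < 2) :
    closedIdealGen (1 - u * star u) = closedIdealGen (1 - v * star v) ∧
    closedIdealGen (1 - star u * u) = closedIdealGen (1 - star v * v) := by
  letI := CStarAlgebra.spectralOrder A
  haveI := CStarAlgebra.spectralOrderedRing A
  have hd' : ‖v - u‖ < 2 := by rwa [norm_sub_rev]
  have hds : ‖star u - star v‖ < 2 := by rwa [← star_sub, norm_star]
  have hds' : ‖star v - star u‖ < 2 := by rwa [norm_sub_rev]
  constructor
  · exact Set.Subset.antisymm (closedIdealGen_mono (defect_mem hu hv hd))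
      (closedIdealGen_mono (defect_mem hv hu hd'))
  · have h1 := defect_mem hu.star' hv.star' hds
    have h2 := defect_mem hv.star' hu.star' hds'
    simp only [star_star] at h1 h2
    exact Set.Subset.antisymm (closedIdealGen_mono h1) (closedIdealGen_mono h2)
end
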